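/- arXiv:2303.04752 — 2 statements merged into one kernel-verified Lean document; each statement's English description precedes it below -/
import Mathlib

section
/- There exists a constant C > 0 such that for all real numbers a > b ≥ 0 and all ε ∈ (0,1): P(B₂Z₃ ≤ 2ε^b and B₁B₂Z₃ ≤ ε^a) ≤ C · ε^a · min(1, ε^{2b}). -/
open MeasureTheory ProbabilityTheory Real Filter

/-- Density of the Beta distribution `β(u,v)` with respect to Lebesgue measure. -/
noncomputable def betaPDFReal (u v x : ℝ) : ℝ :=
  if 0 < x ∧ x < 1 then
    Real.Gamma (u + v) / (Real.Gamma u * Real.Gamma v) * x ^ (u - 1) * (1 - x) ^ (v - 1)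
  else 0

/-- The Beta distribution `β(u,v)` on `ℝ`. -/
noncomputable def betaMeasure (u v : ℝ) : Measure ℝ :=
  volume.withDensity fun x => ENNReal.ofReal (_root_.betaPDFReal u v x)

/-- Density of the generalized Gamma distribution `GG(u,v)` w.r.t. Lebesgue measure. -/
noncomputable def genGammaPDFReal (u v x : ℝ) : ℝ :=
  if 0 < x then v / Real.Gamma (u / v) * x ^ (u - 1) * Real.exp (-(x ^ v)) else 0

/-- The generalized Gamma distribution `GG(u,v)` on `ℝ`. -/
noncomputable def genGammaMeasure (u v : ℝ) : Measure ℝ :=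
  volume.withDensity fun x => ENNReal.ofReal (genGammaPDFReal u v x)

lemma Gamma3 : Real.Gamma 3 = 2 := by
  rw [show (3:ℝ) = ((2:ℕ):ℝ)+1 by norm_num, Real.Gamma_nat_eq_factorial]
  norm_num [Nat.factorial]

lemma Gamma4 : Real.Gamma 4 = 6 := by
  rw [show (4:ℝ) = ((3:ℕ):ℝ)+1 by norm_num, Real.Gamma_nat_eq_factorial]
  norm_num [Nat.factorial]

/-- generic cdf bound helper -/
lemma cdf_bound_aux (pdf : ℝ → ℝ) (t K : ℝ)
    (hbound : ∀ x ∈ Set.Iic t,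
      ENNReal.ofReal (pdf x) ≤ (Set.Ioc 0 t).indicator (fun _ => ENNReal.ofReal K) x) :
    volume.withDensity (fun x => ENNReal.ofReal (pdf x)) (Set.Iic t)
      ≤ ENNReal.ofReal K * ENNReal.ofReal t := by
  rw [withDensity_apply _ measurableSet_Iic]
  calc ∫⁻ x in Set.Iic t, ENNReal.ofReal (pdf x)
      ≤ ∫⁻ x in Set.Iic t, (Set.Ioc 0 t).indicator (fun _ => ENNReal.ofReal K) x :=
        setLIntegral_mono (measurable_const.indicator measurableSet_Ioc) hbound
    _ = ENNReal.ofReal K * (volume.restrict (Set.Iic t)) (Set.Ioc 0 t) := by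
        rw [lintegral_indicator measurableSet_Ioc, setLIntegral_const]
    _ ≤ ENNReal.ofReal K * volume (Set.Ioc 0 t) := by
        gcongr
        exact Measure.restrict_le_self
    _ = ENNReal.ofReal K * ENNReal.ofReal t := by rw [Real.volume_Ioc, sub_zero]

noncomputable def ggC : ℝ := 2 / Real.Gamma (5/2)

lemma ggC_pos : 0 < ggC :=
  div_pos (by norm_num) (Real.Gamma_pos_of_pos (by norm_num))

lemma beta12_Iic {t : ℝ} (ht : 0 ≤ t) :
    _root_.betaMeasure 1 2 (Set.Iic t) ≤ ENNReal.ofReal (2 * t) := by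
  rw [ENNReal.ofReal_mul (by norm_num : (0:ℝ) ≤ 2)]
  apply cdf_bound_aux
  intro x hx
  unfold _root_.betaPDFReal
  split_ifs with hcond
  · rw [Set.indicator_of_mem (Set.mem_Ioc.mpr ⟨hcond.1, hx⟩)]
    apply ENNReal.ofReal_le_ofReal
    rw [show (1:ℝ)+2 = 3 by norm_num, Gamma3, Real.Gamma_one, Real.Gamma_two,
      show (1:ℝ)-1 = 0 by norm_num, show (2:ℝ)-1 = 1 by norm_num,
      Real.rpow_zero, Real.rpow_one]
    nlinarith [hcond.1, hcond.2]
  · simp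

lemma beta31_Iic {t : ℝ} (ht : 0 ≤ t) :
    _root_.betaMeasure 3 1 (Set.Iic t) ≤ ENNReal.ofReal (3 * t^2 * t) := by
  rw [ENNReal.ofReal_mul (by positivity : (0:ℝ) ≤ 3 * t^2)]
  apply cdf_bound_aux
  intro x hx
  unfold _root_.betaPDFReal
  split_ifs with hcond
  · rw [Set.indicator_of_mem (Set.mem_Ioc.mpr ⟨hcond.1, hx⟩)]
    apply ENNReal.ofReal_le_ofReal
    rw [show (3:ℝ)+1 = 4 by norm_num, Gamma4, Gamma3, Real.Gamma_one,
      show (3:ℝ)-1 = 2 by norm_num, show (1:ℝ)-1 = 0 by norm_num,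
      Real.rpow_zero, Real.rpow_two]
    have h1 : x ^ 2 ≤ t ^ 2 := pow_le_pow_left₀ hcond.1.le hx 2
    nlinarith
  · simp

lemma gg52_Iic {t : ℝ} (ht : 0 ≤ t) :
    genGammaMeasure 5 2 (Set.Iic t) ≤ ENNReal.ofReal (ggC * t^4 * t) := by
  rw [ENNReal.ofReal_mul (mul_nonneg ggC_pos.le (by positivity))]
  apply cdf_bound_aux
  intro x hx
  unfold genGammaPDFReal
  split_ifs with hcond
  · rw [Set.indicator_of_mem (Set.mem_Ioc.mpr ⟨hcond, hx⟩)]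
    apply ENNReal.ofReal_le_ofReal
    rw [show (5:ℝ)-1 = ((4:ℕ):ℝ) by norm_num, Real.rpow_natCast]
    have he : Real.exp (-(x ^ (2:ℝ))) ≤ 1 := by
      rw [Real.exp_le_one_iff]
      simp only [Left.neg_nonpos_iff]
      positivity
    have h1 : x ^ 4 ≤ t ^ 4 := by
      exact pow_le_pow_left₀ hcond.le hx 4
    have hg : 0 < 2 / Real.Gamma (5/2) := ggC_pos
    calc 2 / Real.Gamma (5/2) * x ^ 4 * Real.exp (-(x ^ (2:ℝ)))
        ≤ 2 / Real.Gamma (5/2) * x ^ 4 * 1 := by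
          apply mul_le_mul_of_nonneg_left he (by positivity)
      _ ≤ ggC * t ^ 4 := by rw [mul_one, ggC]; nlinarith
  · simp

lemma betaPDF31_le {x : ℝ} : _root_.betaPDFReal 3 1 x ≤ 3 * x^2 := by
  unfold _root_.betaPDFReal
  split_ifs with hcond
  · rw [show (3:ℝ)+1 = 4 by norm_num, Gamma4, Gamma3, Real.Gamma_one,
      show (3:ℝ)-1 = 2 by norm_num, show (1:ℝ)-1 = 0 by norm_num,
      Real.rpow_zero, Real.rpow_two]
    nlinarith [hcond.1]
  · positivity

lemma measurable_betaPDF31 : Measurable fun x => ENNReal.ofReal (_root_.betaPDFReal 3 1 x) := by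
  apply ENNReal.measurable_ofReal.comp
  unfold _root_.betaPDFReal
  apply Measurable.ite
  · exact (measurableSet_lt measurable_const measurable_id).inter
      (measurableSet_lt measurable_id measurable_const)
  · fun_prop
  · exact measurable_const

lemma betaPDF31_nonneg {x : ℝ} : 0 ≤ _root_.betaPDFReal 3 1 x := by
  unfold _root_.betaPDFReal
  split_ifs with hcond
  · rw [show (3:ℝ)+1 = 4 by norm_num, Gamma4, Gamma3, Real.Gamma_one,
      show (3:ℝ)-1 = 2 by norm_num, show (1:ℝ)-1 = 0 by norm_num,
      Real.rpow_zero, Real.rpow_two]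
    nlinarith [hcond.1]
  · exact le_refl 0

lemma FY_bound {Ω : Type*} [MeasurableSpace Ω] (P : Measure Ω) [IsProbabilityMeasure P]
    (B₂ Z₃ : Ω → ℝ) (hB₂ : Measurable B₂) (hZ₃ : Measurable Z₃)
    (hind : IndepFun B₂ Z₃ P)
    (hlaw₂ : P.map B₂ = _root_.betaMeasure 3 1)
    (hlaw₃ : P.map Z₃ = genGammaMeasure 5 2)
    {y : ℝ} (hy : 0 < y) :
    P {ω | B₂ ω * Z₃ ω ≤ y} ≤ ENNReal.ofReal ((3 + 3/2 * ggC) * y^3) := by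
  haveI h3 : IsProbabilityMeasure (P.map Z₃) := Measure.isProbabilityMeasure_map hZ₃.aemeasurable
  have hmapped : P.map (fun ω => (B₂ ω, Z₃ ω)) = (P.map B₂).prod (P.map Z₃) :=
    (indepFun_iff_map_prod_eq_prod_map_map hB₂.aemeasurable hZ₃.aemeasurable).mp hind
  have hsetm : MeasurableSet {p : ℝ×ℝ | p.1 * p.2 ≤ y} :=
    measurableSet_le (measurable_fst.mul measurable_snd) measurable_const
  have step1 : P {ω | B₂ ω * Z₃ ω ≤ y} = ((P.map B₂).prod (P.map Z₃)) {p : ℝ×ℝ | p.1*p.2 ≤ y} := by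
    rw [← hmapped, Measure.map_apply (hB₂.prodMk hZ₃) hsetm]
    rfl
  have step2 : ((P.map B₂).prod (P.map Z₃)) {p : ℝ×ℝ | p.1*p.2 ≤ y}
      = ∫⁻ x, (P.map Z₃) {z | x*z ≤ y} ∂(P.map B₂) := by
    rw [Measure.prod_apply hsetm]
    rfl
  set h : ℝ → ENNReal := fun x => if y < x then ENNReal.ofReal (ggC * (y/x)^4 * (y/x)) else 1
    with hh
  have hptw : ∀ x, (P.map Z₃) {z | x*z ≤ y} ≤ h x := by
    intro x
    by_cases hxy : y < x
    · have hx0 : 0 < x := lt_trans hy hxy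
      have hset : {z : ℝ | x*z ≤ y} = Set.Iic (y/x) := by
        ext z
        rw [Set.mem_setOf_eq, Set.mem_Iic, le_div_iff₀ hx0, mul_comm]
      rw [hset, hlaw₃, hh]
      simp only [if_pos hxy]
      exact gg52_Iic (by positivity)
    · rw [hh]
      simp only [if_neg hxy]
      exact prob_le_one
  have hmeas_h : Measurable h := by
    apply Measurable.ite (measurableSet_lt measurable_const measurable_id) _ measurable_const
    fun_prop
  have hsplit : ∫⁻ x, h x ∂(P.map B₂)
      = ∫⁻ x in Set.Iic y, h x ∂(P.map B₂) + ∫⁻ x in Set.Ioi y, h x ∂(P.map B₂) := by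
    rw [← Set.compl_Iic]
    exact (lintegral_add_compl h measurableSet_Iic).symm
  have hpiece1 : ∫⁻ x in Set.Iic y, h x ∂(P.map B₂) ≤ ENNReal.ofReal (3 * y^2 * y) := by
    calc ∫⁻ x in Set.Iic y, h x ∂(P.map B₂)
        ≤ ∫⁻ _x in Set.Iic y, 1 ∂(P.map B₂) := by
          apply setLIntegral_mono measurable_const
          intro x hx
          rw [hh]
          simp only [if_neg (not_lt.mpr (Set.mem_Iic.mp hx))]
          exact le_refl 1
      _ = (P.map B₂) (Set.Iic y) := by rw [setLIntegral_one]
      _ ≤ ENNReal.ofReal (3 * y^2 * y) := by rw [hlaw₂]; exact beta31_Iic hy.le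
  set K : ℝ := 3 * ggC * y^5 with hK
  have hKpos : 0 < K := by
    rw [hK]; have := ggC_pos; positivity
  have hpiece2 : ∫⁻ x in Set.Ioi y, h x ∂(P.map B₂) ≤ ENNReal.ofReal (3/2 * ggC * y^3) := by
    rw [hlaw₂]
    unfold _root_.betaMeasure
    rw [setLIntegral_withDensity_eq_setLIntegral_mul volume measurable_betaPDF31 hmeas_h
      measurableSet_Ioi]
    have hbd : ∀ x ∈ Set.Ioi y,
        ((fun x => ENNReal.ofReal (_root_.betaPDFReal 3 1 x)) * h) x
          ≤ ENNReal.ofReal (K * x ^ (-3:ℝ)) := by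
      intro x hx
      have hyx : y < x := hx
      have hx0 : 0 < x := lt_trans hy hyx
      have hgnn : 0 ≤ ggC * (y/x)^4 * (y/x) := by
        have := ggC_pos; positivity
      show ENNReal.ofReal (_root_.betaPDFReal 3 1 x) * h x ≤ _
      rw [hh]
      simp only [if_pos hyx]
      rw [← ENNReal.ofReal_mul betaPDF31_nonneg]
      apply ENNReal.ofReal_le_ofReal
      have hxpow : x ^ (-3:ℝ) = (x^3)⁻¹ := by
        rw [show (-3:ℝ) = -((3:ℕ):ℝ) by norm_num, Real.rpow_neg hx0.le, Real.rpow_natCast]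
      rw [hxpow, hK]
      calc _root_.betaPDFReal 3 1 x * (ggC * (y/x)^4 * (y/x))
          ≤ 3*x^2 * (ggC * (y/x)^4 * (y/x)) := mul_le_mul_of_nonneg_right betaPDF31_le hgnn
        _ = 3 * ggC * y^5 * (x^3)⁻¹ := by field_simp
    have hint : Integrable (fun x => K * x^(-3:ℝ)) (volume.restrict (Set.Ioi y)) :=
      (integrableOn_Ioi_rpow_of_lt (by norm_num) hy).const_mul K
    have hnn : 0 ≤ᵐ[volume.restrict (Set.Ioi y)] fun x => K * x^(-3:ℝ) :=
      (ae_restrict_iff' measurableSet_Ioi).mpr (ae_of_all _ (fun x hx =>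
        mul_nonneg hKpos.le (Real.rpow_nonneg (le_of_lt (lt_trans hy hx)) _)))
    calc ∫⁻ x in Set.Ioi y, ((fun x => ENNReal.ofReal (_root_.betaPDFReal 3 1 x)) * h) x
        ≤ ∫⁻ x in Set.Ioi y, ENNReal.ofReal (K * x^(-3:ℝ)) :=
          setLIntegral_mono (by fun_prop) hbd
      _ = ENNReal.ofReal (∫ x in Set.Ioi y, K * x^(-3:ℝ)) :=
          (ofReal_integral_eq_lintegral_ofReal hint hnn).symm
      _ = ENNReal.ofReal (3/2 * ggC * y^3) := by
          rw [MeasureTheory.integral_const_mul, integral_Ioi_rpow_of_lt (by norm_num) hy]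
          congr 1
          have hypow : y ^ (-3+1:ℝ) = (y^2)⁻¹ := by
            rw [show (-3+1:ℝ) = -((2:ℕ):ℝ) by norm_num, Real.rpow_neg hy.le, Real.rpow_natCast]
          rw [hypow, hK]
          field_simp
          ring
  calc P {ω | B₂ ω * Z₃ ω ≤ y}
      = ∫⁻ x, (P.map Z₃) {z | x*z ≤ y} ∂(P.map B₂) := by rw [step1, step2]
    _ ≤ ∫⁻ x, h x ∂(P.map B₂) := lintegral_mono hptw
    _ = _ + _ := hsplit
    _ ≤ ENNReal.ofReal (3 * y^2 * y) + ENNReal.ofReal (3/2 * ggC * y^3) :=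
        add_le_add hpiece1 hpiece2
    _ = ENNReal.ofReal ((3 + 3/2 * ggC) * y^3) := by
        rw [← ENNReal.ofReal_add (by positivity) (by have := ggC_pos; positivity)]
        congr 1
        ring

/-- There is `C > 0` such that for all `a > b ≥ 0` and `ε ∈ (0,1)`,
`P(B₂Z₃ ≤ 2ε^b ∧ B₁B₂Z₃ ≤ ε^a) ≤ C * ε^a * min 1 (ε^(2b))`. -/
theorem intermediate_bound {Ω : Type*} [MeasurableSpace Ω] (P : Measure Ω) [IsProbabilityMeasure P]
    (B₁ B₂ Z₃ : Ω → ℝ) (hB₁ : Measurable B₁) (hB₂ : Measurable B₂) (hZ₃ : Measurable Z₃)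
    (hindep : iIndepFun ![B₁, B₂, Z₃] P)
    (hlaw₁ : P.map B₁ = _root_.betaMeasure 1 2)
    (hlaw₂ : P.map B₂ = _root_.betaMeasure 3 1)
    (hlaw₃ : P.map Z₃ = genGammaMeasure 5 2) :
    ∃ C : ℝ, 0 < C ∧ ∀ a b ε : ℝ, b < a → 0 ≤ b → 0 < ε → ε < 1 →
      P {ω | B₂ ω * Z₃ ω ≤ 2 * ε ^ b ∧ B₁ ω * B₂ ω * Z₃ ω ≤ ε ^ a}
        ≤ ENNReal.ofReal (C * ε ^ a * min 1 (ε ^ (2 * b))) := by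
  set CY : ℝ := 3 + 3/2 * ggC with hCY
  have hCYpos : 0 < CY := by rw [hCY]; have := ggC_pos; positivity
  refine ⟨32 * CY, by positivity, ?_⟩
  intro a b ε hba hb hε hε1
  have hmeasvec : ∀ i, Measurable (![B₁, B₂, Z₃] i) := by
    intro i
    fin_cases i
    · exact hB₁
    · exact hB₂
    · exact hZ₃
  have hind23 : IndepFun B₂ Z₃ P := by
    have := hindep.indepFun (show (1 : Fin 3) ≠ 2 by decide)
    simpa using this
  have hindY1 : IndepFun (fun ω => B₂ ω * Z₃ ω) B₁ P := by
    have hpair := hindep.indepFun_prodMk hmeasvec 1 2 0 (by decide) (by decide)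
    have := hpair.comp (measurable_fst.mul measurable_snd) measurable_id
    exact this
  set δ : ℝ := ε ^ a with hδdef
  set M : ℝ := 2 * ε ^ b with hMdef
  have hδ : 0 < δ := Real.rpow_pos_of_pos hε a
  have hεb : 0 < ε ^ b := Real.rpow_pos_of_pos hε b
  have hM : 0 < M := by rw [hMdef]; positivity
  -- the dyadic pieces
  set Ak : ℕ → Set Ω := fun k =>
    (fun ω => B₂ ω * Z₃ ω) ⁻¹' (Set.Iic (M / 2 ^ k)) ∩ B₁ ⁻¹' (Set.Iic (2 * δ * 2 ^ k / M))
    with hAk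
  -- covering
  have hcover : {ω | B₂ ω * Z₃ ω ≤ 2 * ε ^ b ∧ B₁ ω * B₂ ω * Z₃ ω ≤ ε ^ a}
      ⊆ ({ω | B₂ ω ≤ 0} ∪ {ω | Z₃ ω ≤ 0}) ∪ ⋃ k, Ak k := by
    intro ω hω
    obtain ⟨hYM, hB1Y⟩ := hω
    by_cases h2 : B₂ ω ≤ 0
    · exact Or.inl (Or.inl h2)
    by_cases h3 : Z₃ ω ≤ 0
    · exact Or.inl (Or.inr h3)
    push_neg at h2 h3
    have hY : 0 < B₂ ω * Z₃ ω := mul_pos h2 h3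
    set Y : ℝ := B₂ ω * Z₃ ω with hYdef
    have hex : ∃ k : ℕ, M < Y * 2 ^ (k + 1) := by
      obtain ⟨n, hn⟩ := pow_unbounded_of_one_lt (M / Y) (one_lt_two (α := ℝ))
      refine ⟨n, ?_⟩
      rw [div_lt_iff₀ hY] at hn
      have h2n : (2:ℝ) ^ n ≤ 2 ^ (n + 1) := by
        apply pow_le_pow_right₀ one_le_two (Nat.le_succ n)
      nlinarith
    have hk := Nat.find_spec hex
    set k : ℕ := Nat.find hex with hkdef
    right
    refine Set.mem_iUnion.mpr ⟨k, ?_, ?_⟩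
    · -- Y ≤ M / 2^k
      show Y ≤ M / 2 ^ k
      rcases Nat.eq_zero_or_pos k with hk0 | hkpos
      · rw [hk0]
        simpa using hYM
      · have hnot : ¬ M < Y * 2 ^ ((k - 1) + 1) := Nat.find_min hex (by omega)
        have hk1 : k - 1 + 1 = k := by omega
        rw [hk1] at hnot
        push_neg at hnot
        rw [le_div_iff₀ (by positivity)]
        exact hnot
    · -- B₁ ω ≤ 2δ2^k/M
      show B₁ ω ≤ 2 * δ * 2 ^ k / M
      have hB1 : B₁ ω ≤ δ / Y := by
        rw [le_div_iff₀ hY]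
        calc B₁ ω * Y = B₁ ω * B₂ ω * Z₃ ω := by rw [hYdef]; ring
          _ ≤ δ := hB1Y
      refine le_trans hB1 ?_
      rw [div_le_div_iff₀ hY hM]
      have h' := mul_le_mul_of_nonneg_left hk.le hδ.le
      calc δ * M ≤ δ * (Y * 2 ^ (k+1)) := h'
        _ = 2 * δ * 2 ^ k * Y := by rw [pow_succ]; ring
  -- null sets
  have hnull2 : P {ω | B₂ ω ≤ 0} = 0 := by
    have h : {ω | B₂ ω ≤ 0} = B₂ ⁻¹' (Set.Iic 0) := rfl
    rw [h, ← Measure.map_apply hB₂ measurableSet_Iic, hlaw₂]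
    refine le_antisymm ?_ zero_le
    have h0 := beta31_Iic (le_refl (0:ℝ))
    simpa using h0
  have hnull3 : P {ω | Z₃ ω ≤ 0} = 0 := by
    have h : {ω | Z₃ ω ≤ 0} = Z₃ ⁻¹' (Set.Iic 0) := rfl
    rw [h, ← Measure.map_apply hZ₃ measurableSet_Iic, hlaw₃]
    refine le_antisymm ?_ zero_le
    have h0 := gg52_Iic (le_refl (0:ℝ))
    simpa using h0
  -- bound each piece
  have hAkbound : ∀ k : ℕ, P (Ak k) ≤ ENNReal.ofReal (4 * CY * δ * M ^ 2 * (1/4 : ℝ) ^ k) := by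
    intro k
    have h2k : (0:ℝ) < 2 ^ k := by positivity
    have hyk : (0:ℝ) < M / 2 ^ k := by positivity
    have htk : (0:ℝ) ≤ 2 * δ * 2 ^ k / M := by positivity
    rw [hAk, hindY1.measure_inter_preimage_eq_mul _ _ measurableSet_Iic measurableSet_Iic]
    have hfac1 : P ((fun ω => B₂ ω * Z₃ ω) ⁻¹' Set.Iic (M / 2 ^ k))
        ≤ ENNReal.ofReal (CY * (M / 2 ^ k) ^ 3) :=
      FY_bound P B₂ Z₃ hB₂ hZ₃ hind23 hlaw₂ hlaw₃ hyk
    have hfac2 : P (B₁ ⁻¹' Set.Iic (2 * δ * 2 ^ k / M))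
        ≤ ENNReal.ofReal (2 * (2 * δ * 2 ^ k / M)) := by
      rw [← Measure.map_apply hB₁ measurableSet_Iic, hlaw₁]
      exact beta12_Iic htk
    calc P ((fun ω => B₂ ω * Z₃ ω) ⁻¹' Set.Iic (M / 2 ^ k))
          * P (B₁ ⁻¹' Set.Iic (2 * δ * 2 ^ k / M))
        ≤ ENNReal.ofReal (CY * (M / 2 ^ k) ^ 3) * ENNReal.ofReal (2 * (2 * δ * 2 ^ k / M)) :=
          mul_le_mul' hfac1 hfac2
      _ = ENNReal.ofReal (CY * (M / 2 ^ k) ^ 3 * (2 * (2 * δ * 2 ^ k / M))) :=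
          (ENNReal.ofReal_mul (by positivity)).symm
      _ = ENNReal.ofReal (4 * CY * δ * M ^ 2 * (1/4 : ℝ) ^ k) := by
          congr 1
          have h4 : (1/4:ℝ)^k = ((2:ℝ)^k)⁻¹ * ((2:ℝ)^k)⁻¹ := by
            rw [← mul_inv, ← mul_pow]
            rw [div_pow, one_pow, one_div]
            norm_num
          rw [h4, div_pow]
          field_simp
          ring
  -- sum the series
  have hsum : ∑' k : ℕ, ENNReal.ofReal (4 * CY * δ * M ^ 2 * (1/4 : ℝ) ^ k)
      ≤ ENNReal.ofReal (4 * CY * δ * M ^ 2) * 2 := by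
    have hterm : ∀ k : ℕ, ENNReal.ofReal (4 * CY * δ * M ^ 2 * (1/4 : ℝ) ^ k)
        = ENNReal.ofReal (4 * CY * δ * M ^ 2) * ENNReal.ofReal ((1/4 : ℝ) ^ k) := by
      intro k
      rw [← ENNReal.ofReal_mul (by positivity)]
    calc ∑' k : ℕ, ENNReal.ofReal (4 * CY * δ * M ^ 2 * (1/4 : ℝ) ^ k)
        = ENNReal.ofReal (4 * CY * δ * M ^ 2) * ∑' k : ℕ, ENNReal.ofReal ((1/4 : ℝ) ^ k) := by
          rw [← ENNReal.tsum_mul_left]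
          exact tsum_congr hterm
      _ ≤ ENNReal.ofReal (4 * CY * δ * M ^ 2) * 2 := by
          gcongr
          calc ∑' k : ℕ, ENNReal.ofReal ((1/4 : ℝ) ^ k)
              ≤ ∑' k : ℕ, (2⁻¹ : ENNReal) ^ k := by
                apply ENNReal.tsum_le_tsum
                intro k
                have h14 : ((1/4 : ℝ)) ^ k ≤ (1/2 : ℝ) ^ k :=
                  pow_le_pow_left₀ (by norm_num) (by norm_num) k
                calc ENNReal.ofReal ((1/4 : ℝ) ^ k) ≤ ENNReal.ofReal ((1/2 : ℝ) ^ k) :=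
                      ENNReal.ofReal_le_ofReal h14
                  _ = (ENNReal.ofReal (1/2 : ℝ)) ^ k := ENNReal.ofReal_pow (by norm_num) k
                  _ = (2⁻¹ : ENNReal) ^ k := by
                      congr 1
                      rw [one_div, ENNReal.ofReal_inv_of_pos (by norm_num)]
                      norm_num
            _ = (1 - 2⁻¹)⁻¹ := ENNReal.tsum_geometric 2⁻¹
            _ = 2 := by rw [ENNReal.one_sub_inv_two, inv_inv]
  -- put it together
  have hfinal : P {ω | B₂ ω * Z₃ ω ≤ 2 * ε ^ b ∧ B₁ ω * B₂ ω * Z₃ ω ≤ ε ^ a}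
      ≤ ENNReal.ofReal (8 * CY * δ * M ^ 2) := by
    calc P {ω | B₂ ω * Z₃ ω ≤ 2 * ε ^ b ∧ B₁ ω * B₂ ω * Z₃ ω ≤ ε ^ a}
        ≤ P (({ω | B₂ ω ≤ 0} ∪ {ω | Z₃ ω ≤ 0}) ∪ ⋃ k, Ak k) := measure_mono hcover
      _ ≤ P ({ω | B₂ ω ≤ 0} ∪ {ω | Z₃ ω ≤ 0}) + P (⋃ k, Ak k) := measure_union_le _ _
      _ ≤ 0 + ∑' k, P (Ak k) := by
          gcongr
          · calc P ({ω | B₂ ω ≤ 0} ∪ {ω | Z₃ ω ≤ 0})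
                ≤ P {ω | B₂ ω ≤ 0} + P {ω | Z₃ ω ≤ 0} := measure_union_le _ _
              _ = 0 := by rw [hnull2, hnull3, add_zero]
          · exact measure_iUnion_le _
      _ = ∑' k, P (Ak k) := by rw [zero_add]
      _ ≤ ∑' k : ℕ, ENNReal.ofReal (4 * CY * δ * M ^ 2 * (1/4 : ℝ) ^ k) :=
          ENNReal.tsum_le_tsum hAkbound
      _ ≤ ENNReal.ofReal (4 * CY * δ * M ^ 2) * 2 := hsum
      _ = ENNReal.ofReal (8 * CY * δ * M ^ 2) := by
          rw [show (2 : ENNReal) = ENNReal.ofReal (2:ℝ) by norm_num,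
            ← ENNReal.ofReal_mul (by positivity)]
          congr 1
          ring
  -- rewrite the right-hand side
  have hmin : min 1 (ε ^ (2 * b)) = ε ^ (2 * b) :=
    min_eq_right (Real.rpow_le_one hε.le hε1.le (by positivity))
  rw [hmin]
  have hsq : ε ^ (2 * b) = (ε ^ b) ^ 2 := by
    rw [mul_comm, Real.rpow_mul hε.le, Real.rpow_two]
  calc P {ω | B₂ ω * Z₃ ω ≤ 2 * ε ^ b ∧ B₁ ω * B₂ ω * Z₃ ω ≤ ε ^ a}
      ≤ ENNReal.ofReal (8 * CY * δ * M ^ 2) := hfinal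
    _ = ENNReal.ofReal (32 * CY * ε ^ a * ε ^ (2 * b)) := by
        congr 1
        rw [hsq, hMdef, hδdef]
        ring
end

section
/- There exists a constant C > 0 such that for every integer i ≥ 2 and every real A > 8: if B and Z are independent random variables with B ~ β(2i−3, 1) and Z ~ GG(2i−1, 2), then P(Z·(1−B) ≥ A/√i) ≤ C · exp(−A^{2/3}). -/
open MeasureTheory ProbabilityTheory Real Filter

open scoped ENNReal

lemma measurable_genGammaPDFReal (u v : ℝ) : Measurable (genGammaPDFReal u v) := by
  unfold genGammaPDFReal
  exact Measurable.ite measurableSet_Ioi (by fun_prop) measurable_const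

lemma measurable_aux (c p : ℝ) :
    Measurable fun x : ℝ => if 0 < x then c * x ^ p * Real.exp (-(x ^ (2:ℝ)) / 2) else 0 :=
  Measurable.ite measurableSet_Ioi (by fun_prop) measurable_const

lemma gg_subst (u : ℝ)
    (h1 : ∫⁻ x, ENNReal.ofReal (genGammaPDFReal u 2 x) = 1) :
    ∫⁻ x, ENNReal.ofReal (if 0 < x then 2 / Real.Gamma (u / 2) * x ^ (u - 1) *
        Real.exp (-(x ^ (2:ℝ)) / 2) else 0) = ENNReal.ofReal (Real.sqrt 2 ^ u) := by
  set c : ℝ := 2 / Real.Gamma (u / 2) with hc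
  set g : ℝ → ℝ≥0∞ := fun x => ENNReal.ofReal (if 0 < x then c * x ^ (u - 1) *
        Real.exp (-(x ^ (2:ℝ)) / 2) else 0) with hg
  have hs2 : (0:ℝ) < Real.sqrt 2 := by positivity
  have key : ∀ x : ℝ, g (Real.sqrt 2 * x) =
      ENNReal.ofReal (Real.sqrt 2 ^ (u - 1)) * ENNReal.ofReal (genGammaPDFReal u 2 x) := by
    intro x
    by_cases hx : 0 < x
    · have hx2 : 0 < Real.sqrt 2 * x := by positivity
      have e1 : (Real.sqrt 2 * x) ^ (u - 1) = Real.sqrt 2 ^ (u - 1) * x ^ (u - 1) :=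
        Real.mul_rpow hs2.le hx.le
      have e2 : (Real.sqrt 2 * x) ^ (2:ℝ) = 2 * x ^ (2:ℝ) := by
        rw [Real.mul_rpow hs2.le hx.le]
        congr 1
        rw [show (2:ℝ) = ((2:ℕ):ℝ) by norm_num, Real.rpow_natCast]
        simp [Real.sq_sqrt]
      simp only [hg, genGammaPDFReal, if_pos hx2, if_pos hx, e1, e2]
      rw [← ENNReal.ofReal_mul (by positivity)]
      congr 1
      simp only [hc]
      ring
    · have hx2 : ¬ (0 < Real.sqrt 2 * x) := by
        push_neg at hx ⊢; nlinarith
      simp [hg, genGammaPDFReal, if_neg hx, if_neg hx2]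
  have hmeas : Measurable g := by
    apply Measurable.ennreal_ofReal
    exact measurable_aux c (u-1)
  have hmap : ∫⁻ x, g (Real.sqrt 2 * x) = ENNReal.ofReal |(Real.sqrt 2)⁻¹| * ∫⁻ x, g x := by
    rw [← lintegral_map hmeas (measurable_const_mul _), Real.map_volume_mul_left hs2.ne',
      lintegral_smul_measure, smul_eq_mul]
  have hval : ∫⁻ x, g (Real.sqrt 2 * x) = ENNReal.ofReal (Real.sqrt 2 ^ (u - 1)) := by
    simp only [key]
    rw [lintegral_const_mul' _ _ ENNReal.ofReal_ne_top, h1, mul_one]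
  rw [hval] at hmap
  have h2 : ENNReal.ofReal (Real.sqrt 2) * (ENNReal.ofReal |(Real.sqrt 2)⁻¹| * ∫⁻ x, g x)
      = ∫⁻ x, g x := by
    rw [← mul_assoc, ← ENNReal.ofReal_mul hs2.le]
    rw [abs_of_pos (by positivity), mul_inv_cancel₀ hs2.ne']
    simp
  calc ∫⁻ x, g x = ENNReal.ofReal (Real.sqrt 2) * ENNReal.ofReal (Real.sqrt 2 ^ (u-1)) := by
        rw [← h2, hmap]
    _ = ENNReal.ofReal (Real.sqrt 2 ^ u) := by
        rw [← ENNReal.ofReal_mul hs2.le]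
        congr 1
        nth_rewrite 1 [← Real.rpow_one (Real.sqrt 2)]
        rw [← Real.rpow_add hs2]
        ring_nf

lemma gg_zero (u v : ℝ) : genGammaMeasure u v (Set.Iic 0) = 0 := by
  rw [genGammaMeasure, withDensity_apply _ measurableSet_Iic]
  rw [setLIntegral_congr_fun measurableSet_Iic (g := fun _ => 0)
    (fun x hx => by
      simp only [genGammaPDFReal]
      rw [if_neg (not_lt.mpr hx), ENNReal.ofReal_zero])]
  simp

lemma gg_tail (u a : ℝ) (ha : 0 < a)
    (h1 : ∫⁻ x, ENNReal.ofReal (genGammaPDFReal u 2 x) = 1) :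
    genGammaMeasure u 2 (Set.Ici a)
      ≤ ENNReal.ofReal (Real.exp (-(a ^ (2:ℝ)) / 2) * Real.sqrt 2 ^ u) := by
  set c : ℝ := 2 / Real.Gamma (u / 2) with hc
  set g : ℝ → ℝ≥0∞ := fun x => ENNReal.ofReal (if 0 < x then c * x ^ (u - 1) *
        Real.exp (-(x ^ (2:ℝ)) / 2) else 0) with hg
  rw [genGammaMeasure, withDensity_apply _ measurableSet_Ici]
  have hbd : ∀ x ∈ Set.Ici a, ENNReal.ofReal (genGammaPDFReal u 2 x)
      ≤ ENNReal.ofReal (Real.exp (-(a ^ (2:ℝ)) / 2)) * g x := by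
    intro x hx
    have hxa : a ≤ x := hx
    have hx0 : 0 < x := lt_of_lt_of_le ha hxa
    rcases le_or_gt 0 (c * x ^ (u - 1)) with hq | hq
    · rw [hg, ← ENNReal.ofReal_mul (Real.exp_nonneg _)]
      apply ENNReal.ofReal_le_ofReal
      simp only [genGammaPDFReal, if_pos hx0, ← hc]
      have h3 : Real.exp (-(x ^ (2:ℝ)) / 2) ≤ Real.exp (-(a ^ (2:ℝ)) / 2) := by
        apply Real.exp_le_exp.mpr
        have : a ^ (2:ℝ) ≤ x ^ (2:ℝ) := Real.rpow_le_rpow ha.le hxa (by norm_num)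
        linarith
      have h4 : Real.exp (-(x ^ (2:ℝ))) = Real.exp (-(x ^ (2:ℝ)) / 2) * Real.exp (-(x ^ (2:ℝ)) / 2) := by
        rw [← Real.exp_add]; ring_nf
      have h5 := Real.exp_pos (-(x ^ (2:ℝ)) / 2)
      rw [h4]
      nlinarith [mul_le_mul_of_nonneg_left h3 (mul_nonneg hq h5.le)]
    · have : genGammaPDFReal u 2 x ≤ 0 := by
        simp only [genGammaPDFReal, if_pos hx0]
        have := Real.exp_pos (-(x ^ (2:ℝ)))
        nlinarith
      rw [ENNReal.ofReal_eq_zero.mpr this]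
      exact zero_le
  calc ∫⁻ x in Set.Ici a, ENNReal.ofReal (genGammaPDFReal u 2 x)
      ≤ ∫⁻ x in Set.Ici a, ENNReal.ofReal (Real.exp (-(a ^ (2:ℝ)) / 2)) * g x :=
        setLIntegral_mono (by exact Measurable.const_mul (Measurable.ennreal_ofReal (measurable_aux c (u-1))) _) hbd
    _ ≤ ∫⁻ x, ENNReal.ofReal (Real.exp (-(a ^ (2:ℝ)) / 2)) * g x :=
        setLIntegral_le_lintegral _ _
    _ = ENNReal.ofReal (Real.exp (-(a ^ (2:ℝ)) / 2)) * ∫⁻ x, g x :=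
        lintegral_const_mul' _ _ ENNReal.ofReal_ne_top
    _ = ENNReal.ofReal (Real.exp (-(a ^ (2:ℝ)) / 2)) * ENNReal.ofReal (Real.sqrt 2 ^ u) := by
        rw [hg, gg_subst u h1]
    _ = ENNReal.ofReal (Real.exp (-(a ^ (2:ℝ)) / 2) * Real.sqrt 2 ^ u) := by
        rw [← ENNReal.ofReal_mul (Real.exp_nonneg _)]

lemma beta_ge_one (u : ℝ) : _root_.betaMeasure u 1 (Set.Ici 1) = 0 := by
  rw [_root_.betaMeasure, withDensity_apply _ measurableSet_Ici]
  rw [setLIntegral_congr_fun measurableSet_Ici (g := fun _ => 0)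
    (fun x hx => by
      simp only [_root_.betaPDFReal]
      rw [if_neg (by push_neg; intro h; exact hx), ENNReal.ofReal_zero])]
  simp

lemma beta_nonpos (u : ℝ) (c : ℝ) (hc : c ≤ 0) : _root_.betaMeasure u 1 (Set.Iic c) = 0 := by
  rw [_root_.betaMeasure, withDensity_apply _ measurableSet_Iic]
  rw [setLIntegral_congr_fun measurableSet_Iic (g := fun _ => 0)
    (fun x hx => by
      simp only [_root_.betaPDFReal]
      rw [if_neg (by push_neg; intro h; exact absurd h (not_lt.mpr (hx.trans hc))),
        ENNReal.ofReal_zero])]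
  simp

lemma beta_tail (u : ℝ) (hu : 1 ≤ u) (c : ℝ) (hc0 : 0 < c) (hc1 : c < 1) :
    _root_.betaMeasure u 1 (Set.Iic c) ≤ ENNReal.ofReal (Real.exp (-u * (1 - c))) := by
  have hu0 : (0:ℝ) < u := by linarith
  have hc := hc0
  have key : _root_.betaMeasure u 1 (Set.Iic c) = ENNReal.ofReal (c ^ u) := by
    rw [_root_.betaMeasure, withDensity_apply _ measurableSet_Iic]
    have hsplit : Set.Iic c = Set.Iic 0 ∪ Set.Ioc 0 c := by
      rw [Set.Iic_union_Ioc_eq_Iic hc.le]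
    rw [hsplit, lintegral_union measurableSet_Ioc (Set.Iic_disjoint_Ioc le_rfl)]
    have h0 : ∫⁻ x in Set.Iic 0, ENNReal.ofReal (_root_.betaPDFReal u 1 x) = 0 := by
      rw [setLIntegral_congr_fun measurableSet_Iic (g := fun _ => 0)
        (fun x hx => by
          simp only [_root_.betaPDFReal]
          rw [if_neg (by push_neg; intro h; exact absurd h (not_lt.mpr hx)), ENNReal.ofReal_zero])]
      simp
    rw [h0, zero_add]
    have hcong : ∫⁻ x in Set.Ioc 0 c, ENNReal.ofReal (_root_.betaPDFReal u 1 x)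
        = ∫⁻ x in Set.Ioc 0 c, ENNReal.ofReal (u * x ^ (u - 1)) := by
      apply setLIntegral_congr_fun measurableSet_Ioc
      intro x hx
      have h01 : 0 < x ∧ x < 1 := ⟨hx.1, lt_of_le_of_lt hx.2 hc1⟩
      simp only [_root_.betaPDFReal, if_pos h01]
      congr 1
      rw [Real.Gamma_one, Real.Gamma_add_one hu0.ne', sub_self, Real.rpow_zero]
      have hg : Real.Gamma u ≠ 0 := (Real.Gamma_pos_of_pos hu0).ne'
      field_simp
    rw [hcong]
    have hint : IntegrableOn (fun x => u * x ^ (u - 1)) (Set.Ioc 0 c) := by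
      have h1 : IntervalIntegrable (fun x : ℝ => x ^ (u-1)) volume 0 c :=
        intervalIntegral.intervalIntegrable_rpow' (by linarith)
      rw [intervalIntegrable_iff_integrableOn_Ioc_of_le hc.le] at h1
      exact h1.const_mul u
    rw [← MeasureTheory.ofReal_integral_eq_lintegral_ofReal hint
      (Filter.Eventually.mono (ae_restrict_mem measurableSet_Ioc) fun x hx => by
        have : (0:ℝ) ≤ x := hx.1.le
        positivity)]
    congr 1
    have hrpow : ∫ (x : ℝ) in (0:ℝ)..c, x ^ (u - 1)
        = (c ^ (u-1+1) - (0:ℝ) ^ (u-1+1))/(u-1+1) := by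
      open intervalIntegral in exact integral_rpow (Or.inl (by linarith))
    rw [← intervalIntegral.integral_of_le hc.le, intervalIntegral.integral_const_mul, hrpow]
    rw [sub_add_cancel, Real.zero_rpow hu0.ne', sub_zero]
    field_simp
  rw [key]
  apply ENNReal.ofReal_le_ofReal
  have h1 : c ≤ Real.exp (-(1 - c)) := by
    have := Real.one_sub_le_exp_neg (1 - c)
    linarith
  calc c ^ u ≤ (Real.exp (-(1-c))) ^ u := Real.rpow_le_rpow hc.le h1 hu0.le
    _ = Real.exp (-u * (1-c)) := by rw [← Real.exp_mul]; ring_nf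

set_option maxHeartbeats 1000000 in
/-- Uniform upper deviation bound for the limit degree: there is `C > 0` such that for every
`i ≥ 2`, `A > 8` and independent `B ~ β(2i-3, 1)`, `Z ~ GG(2i-1, 2)`,
`P(Z(1-B) ≥ A/√i) ≤ C * exp(-A^(2/3))`. -/
theorem limit_degree_upper_deviation :
    ∃ C : ℝ, 0 < C ∧ ∀ (i : ℕ), 2 ≤ i → ∀ A : ℝ, 8 < A →
      ∀ (Ω : Type) (_ : MeasurableSpace Ω) (P : Measure Ω), IsProbabilityMeasure P →
      ∀ (B Z : Ω → ℝ), Measurable B → Measurable Z → IndepFun B Z P →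
        P.map B = _root_.betaMeasure (2 * (i : ℝ) - 3) 1 →
        P.map Z = genGammaMeasure (2 * (i : ℝ) - 1) 2 →
        P {ω | A / Real.sqrt i ≤ Z ω * (1 - B ω)}
          ≤ ENNReal.ofReal (C * Real.exp (-(A ^ ((2 : ℝ) / 3)))) := by
  refine ⟨100, by norm_num, ?_⟩
  intro i hi A hA Ω mΩ P hP B Z hB hZ _ hBmap hZmap
  have hA0 : (0:ℝ) < A := by linarith
  have hi2 : (2:ℝ) ≤ (i:ℝ) := by exact_mod_cast hi
  have hi0 : (0:ℝ) < (i:ℝ) := by linarith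
  set T : ℝ := A ^ ((2:ℝ)/3) with hT
  set p : ℝ := A ^ ((1:ℝ)/3) with hp
  have hp0 : 0 < p := Real.rpow_pos_of_pos hA0 _
  have hp3 : p ^ (3:ℕ) = A := by
    rw [hp, ← Real.rpow_natCast (A ^ ((1:ℝ)/3)) 3, ← Real.rpow_mul hA0.le]
    norm_num
  have hp2 : p ^ (2:ℕ) = T := by
    rw [hp, hT, ← Real.rpow_natCast (A ^ ((1:ℝ)/3)) 2, ← Real.rpow_mul hA0.le]
    norm_num
  have hp_gt : 2 < p := by nlinarith [hp0.le]
  have hT4 : (4:ℝ) < T := by nlinarith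
  have hT0 : (0:ℝ) < T := by linarith
  set s : ℝ := T / i with hs
  set a : ℝ := Real.sqrt i * p with haa
  have hsq : Real.sqrt i * Real.sqrt i = (i:ℝ) := Real.mul_self_sqrt hi0.le
  have hsq0 : (0:ℝ) < Real.sqrt i := Real.sqrt_pos.mpr hi0
  have ha0 : 0 < a := by positivity
  have ha2 : a ^ (2:ℝ) = i * T := by
    rw [show (2:ℝ) = ((2:ℕ):ℝ) by norm_num, Real.rpow_natCast, haa, mul_pow, ← hp2]
    rw [show Real.sqrt i ^ 2 = Real.sqrt i * Real.sqrt i by ring, hsq]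
  have has : a * s = A / Real.sqrt i := by
    rw [haa, hs, eq_div_iff hsq0.ne', ← hp2, ← hp3]
    field_simp
    ring_nf
    nlinarith [hsq]
  -- event inclusion
  have hsub : {ω | A / Real.sqrt i ≤ Z ω * (1 - B ω)} ⊆
      Z ⁻¹' Set.Ici a ∪ B ⁻¹' Set.Iic (1 - s) ∪ Z ⁻¹' Set.Iic 0 ∪ B ⁻¹' Set.Ici 1 := by
    intro ω hω
    simp only [Set.mem_setOf_eq] at hω
    simp only [Set.mem_union, Set.mem_preimage, Set.mem_Ici, Set.mem_Iic]
    by_contra hcon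
    push_neg at hcon
    obtain ⟨⟨⟨hZa, hBs⟩, hZ0⟩, hB1⟩ := hcon
    have h1 : 0 < Z ω := hZ0
    have h2 : 0 < 1 - B ω := by linarith
    have h3 : 1 - B ω < s := by linarith
    have : Z ω * (1 - B ω) < a * s := mul_lt_mul'' hZa h3 h1.le h2.le
    rw [has] at this
    linarith
  -- measure identifications
  have hE1 : P (Z ⁻¹' Set.Ici a) = genGammaMeasure (2 * (i:ℝ) - 1) 2 (Set.Ici a) := by
    rw [← hZmap, Measure.map_apply hZ measurableSet_Ici]
  have hE2 : P (B ⁻¹' Set.Iic (1 - s)) = _root_.betaMeasure (2 * (i:ℝ) - 3) 1 (Set.Iic (1 - s)) := by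
    rw [← hBmap, Measure.map_apply hB measurableSet_Iic]
  have hE3 : P (Z ⁻¹' Set.Iic 0) = 0 := by
    rw [← Measure.map_apply hZ measurableSet_Iic, hZmap, gg_zero]
  have hE4 : P (B ⁻¹' Set.Ici 1) = 0 := by
    rw [← Measure.map_apply hB measurableSet_Ici, hBmap, beta_ge_one]
  -- normalization of the GG density
  have hPZ : IsProbabilityMeasure (P.map Z) := Measure.isProbabilityMeasure_map hZ.aemeasurable
  rw [hZmap] at hPZ
  have h1tot : ∫⁻ x, ENNReal.ofReal (genGammaPDFReal (2 * (i:ℝ) - 1) 2 x) = 1 := by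
    have := hPZ.measure_univ
    rwa [genGammaMeasure, withDensity_apply _ MeasurableSet.univ, Measure.restrict_univ] at this
  -- Z tail bound
  have hZbd : genGammaMeasure (2 * (i:ℝ) - 1) 2 (Set.Ici a)
      ≤ ENNReal.ofReal (Real.exp 4 * Real.exp (-T)) := by
    refine le_trans (gg_tail _ a ha0 h1tot) (ENNReal.ofReal_le_ofReal ?_)
    have hs2e : Real.sqrt 2 ≤ Real.exp 1 := by
      have h1 : Real.sqrt 2 ≤ 2 := by
        nlinarith [Real.sq_sqrt (by norm_num : (0:ℝ) ≤ 2), Real.sqrt_nonneg 2]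
      have h2 : (2:ℝ) ≤ Real.exp 1 := by linarith [Real.add_one_le_exp 1]
      linarith
    have hstep1 : Real.sqrt 2 ^ (2 * (i:ℝ) - 1) ≤ Real.exp (2 * (i:ℝ)) := by
      calc Real.sqrt 2 ^ (2 * (i:ℝ) - 1) ≤ Real.exp 1 ^ (2 * (i:ℝ) - 1) :=
            Real.rpow_le_rpow (Real.sqrt_nonneg 2) hs2e (by linarith)
        _ = Real.exp (2 * (i:ℝ) - 1) := Real.exp_one_rpow _
        _ ≤ Real.exp (2 * (i:ℝ)) := Real.exp_le_exp.mpr (by linarith)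
    rw [ha2]
    calc Real.exp (-((i:ℝ) * T) / 2) * Real.sqrt 2 ^ (2 * (i:ℝ) - 1)
        ≤ Real.exp (-((i:ℝ) * T) / 2) * Real.exp (2 * (i:ℝ)) := by
          exact mul_le_mul_of_nonneg_left hstep1 (Real.exp_nonneg _)
      _ = Real.exp (-((i:ℝ) * T) / 2 + 2 * (i:ℝ)) := by rw [← Real.exp_add]
      _ ≤ Real.exp (4 - T) := Real.exp_le_exp.mpr (by nlinarith [(mul_nonneg (by linarith : (0:ℝ) ≤ (i:ℝ) - 2) (by linarith : (0:ℝ) ≤ T - 4))])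
      _ = Real.exp 4 * Real.exp (-T) := by rw [← Real.exp_add]; ring_nf
  -- B tail bound
  have hBbd : _root_.betaMeasure (2 * (i:ℝ) - 3) 1 (Set.Iic (1 - s))
      ≤ ENNReal.ofReal (Real.exp (-T)) := by
    have hs0 : 0 < s := by positivity
    rcases le_or_gt 1 s with hbig | hsmall
    · rw [beta_nonpos _ _ (by linarith)]
      exact zero_le
    · have huB : (1:ℝ) ≤ 2 * (i:ℝ) - 3 := by linarith
      refine le_trans (beta_tail _ huB (1 - s) (by linarith) (by linarith))
        (ENNReal.ofReal_le_ofReal (Real.exp_le_exp.mpr ?_))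
      have hTi : T < (i:ℝ) := by
        rw [hs, div_lt_one hi0] at hsmall
        exact hsmall
      have hi3 : (3:ℝ) ≤ (i:ℝ) := by
        by_contra h
        push_neg at h
        have hilt : i < 3 := by exact_mod_cast h
        interval_cases i
        · norm_num at hTi ⊢
          linarith
      -- goal: -(2i-3) * (1 - (1-s)) ≤ -T  i.e.  T ≤ (2i-3) * s
      have : T ≤ (2 * (i:ℝ) - 3) * s := by
        rw [hs, ← mul_div_assoc, le_div_iff₀ hi0]
        nlinarith [mul_nonneg (by linarith : (0:ℝ) ≤ (i:ℝ) - 3) hT0.le]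
      linarith [this]
  -- put it together
  have key1 : P (Z ⁻¹' Set.Ici a ∪ B ⁻¹' Set.Iic (1 - s) ∪ Z ⁻¹' Set.Iic 0 ∪ B ⁻¹' Set.Ici 1)
      ≤ P (Z ⁻¹' Set.Ici a) + P (B ⁻¹' Set.Iic (1 - s)) + P (Z ⁻¹' Set.Iic 0) + P (B ⁻¹' Set.Ici 1) := by
    refine (measure_union_le _ _).trans ?_
    refine add_le_add ((measure_union_le _ _).trans ?_) le_rfl
    exact add_le_add (measure_union_le _ _) le_rfl
  have key2 : P {ω | A / Real.sqrt i ≤ Z ω * (1 - B ω)}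
      ≤ ENNReal.ofReal (Real.exp 4 * Real.exp (-T)) + ENNReal.ofReal (Real.exp (-T)) := by
    refine (measure_mono hsub).trans (key1.trans ?_)
    rw [hE3, hE4, add_zero, add_zero, hE1, hE2]
    exact add_le_add hZbd hBbd
  refine key2.trans ?_
  rw [← ENNReal.ofReal_add (by positivity) (Real.exp_nonneg _)]
  apply ENNReal.ofReal_le_ofReal
  have he4 : Real.exp 4 ≤ 99 := by
    have h1 : Real.exp 1 ^ (4:ℕ) = Real.exp 4 := by
      rw [Real.exp_one_pow]
      norm_num
    have h2 : Real.exp 1 ^ (4:ℕ) < 2.7182818286 ^ (4:ℕ) := by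
      apply pow_lt_pow_left₀ Real.exp_one_lt_d9 (Real.exp_pos 1).le
      norm_num
    rw [h1] at h2
    nlinarith
  nlinarith [Real.exp_pos (-T)]
end
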